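/- arXiv:1206.0137 — 13 statements merged into one kernel-verified Lean document; each statement's English description precedes it below -/
import Mathlib

section
/- If U and V are well-ordered subsets of [0,1] and w ∈ [0,1], then the set {(u,v) ∈ U × V : u + v = w} is finite. -/
lemma finite_of_isWF_of_no_strictMono (S : Set ℝ) (hS : S.IsWF)
    (h : ∀ f : ℕ → ℝ, StrictMono f → ¬ ∀ n, f n ∈ S) : S.Finite := by
  by_contra hinf
  rw [← Set.not_infinite, not_not] at hinf
  obtain ⟨f, hfS, hfinj⟩ : ∃ f : ℕ → ℝ, (∀ n, f n ∈ S) ∧ Function.Injective f := by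
    let f := hinf.natEmbedding
    exact ⟨fun n => (f n).1, fun n => (f n).2, fun a b hab => f.injective (Subtype.ext hab)⟩
  obtain ⟨g, hg | hg⟩ := exists_increasing_or_nonincreasing_subseq (LT.lt (α := ℝ)) f
  · exact h (f ∘ g) (fun m n hmn => hg m n hmn) (fun n => hfS (g n))
  · have hanti : StrictAnti (f ∘ g) := by
      intro m n hmn
      have hle : ¬ f (g m) < f (g n) := hg m n hmn
      have hne : f (g m) ≠ f (g n) := fun e => hmn.ne (g.injective (hfinj e))
      exact lt_of_le_of_ne (not_lt.1 hle) (Ne.symm hne)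
    exact (Set.isWF_iff_no_descending_seq.1 hS) (f ∘ g) hanti (fun n => hfS (g n))

/-- If U, V ⊆ [0,1] are well-ordered and w ∈ [0,1], then
{(u,v) ∈ U × V : u + v = w} is finite. -/
theorem sum_fiber_finite (U V : Set ℝ)
    (hU : U ⊆ Set.Icc 0 1) (hV : V ⊆ Set.Icc 0 1)
    (hUwo : U.IsWF) (hVwo : V.IsWF) (w : ℝ) (hw : w ∈ Set.Icc (0:ℝ) 1) :
    {p : ℝ × ℝ | p.1 ∈ U ∧ p.2 ∈ V ∧ p.1 + p.2 = w}.Finite := by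
  set S : Set ℝ := {u | u ∈ U ∧ w - u ∈ V} with hSdef
  have hSfin : S.Finite := by
    apply finite_of_isWF_of_no_strictMono S (hUwo.mono (fun x hx => hx.1))
    intro f hf hfS
    have hanti : StrictAnti (fun n => w - f n) := fun m n hmn => by
      simpa using hf hmn
    exact (Set.isWF_iff_no_descending_seq.1 hVwo) _ hanti (fun n => (hfS n).2)
  have : {p : ℝ × ℝ | p.1 ∈ U ∧ p.2 ∈ V ∧ p.1 + p.2 = w} = (fun u => (u, w - u)) '' S := by
    ext ⟨a, b⟩
    simp only [Set.mem_setOf_eq, Set.mem_image, hSdef, Prod.mk.injEq]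
    constructor
    · rintro ⟨ha, hb, hab⟩
      exact ⟨a, ⟨ha, by rw [show w - a = b by linarith]; exact hb⟩, rfl, by linarith⟩
    · rintro ⟨x, ⟨hx, hwx⟩, rfl, rfl⟩
      exact ⟨hx, hwx, by ring⟩
  rw [this]
  exact hSfin.image _
end

section
/- Let R be a commutative ring that is self-injective (injective as a module over itself). Then for every finitely generated ideal J of R, the double annihilator of J equals J, i.e. ann_R(ann_R(J)) = J. -/
lemma ann_ann_ge {R : Type*} [CommRing R] (J : Ideal R) :
    J ≤ Submodule.annihilator (Submodule.annihilator J) := by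
  intro x hx
  rw [Submodule.mem_annihilator]
  intro t ht
  rw [Submodule.mem_annihilator] at ht
  simpa [mul_comm] using ht x hx

lemma ann_ann_step {R : Type*} [CommRing R] (hB : Module.Baer R R)
    {B : Ideal R} (hB2 : Submodule.annihilator (Submodule.annihilator B) = B) (c : R) :
    Submodule.annihilator (Submodule.annihilator (Ideal.span {c} ⊔ B))
      = Ideal.span {c} ⊔ B := by
  refine le_antisymm ?_ (ann_ann_ge _)
  intro x hx
  set A : Ideal R := Submodule.annihilator B with hA
  set h : A →ₗ[R] R := (LinearMap.mul R R c).comp A.subtype with hh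
  set g : A →ₗ[R] R := (LinearMap.mul R R x).comp A.subtype with hg
  have hle : LinearMap.ker h ≤ LinearMap.ker g := by
    intro t ht
    have ht' : c * (t : R) = 0 := ht
    have htann : (t : R) ∈ Submodule.annihilator (Ideal.span {c} ⊔ B) := by
      rw [Submodule.mem_annihilator]
      intro n hn
      rcases Submodule.mem_sup.mp hn with ⟨y, hy, z, hz, rfl⟩
      rcases Ideal.mem_span_singleton'.mp hy with ⟨a, rfl⟩
      have h1 : (t : R) • (a * c) = 0 := by
        have : (t : R) * (a * c) = a * (c * t) := by ring
        simp [smul_eq_mul, this, ht']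
      have h2 : (t : R) • z = 0 := by
        have := t.2
        rw [Submodule.mem_annihilator] at this
        exact this z hz
      simp only [smul_eq_mul] at h1 h2
      show (t : R) * (a * c + z) = 0
      rw [mul_add, h1, h2, add_zero]
    have := Submodule.mem_annihilator.mp hx _ htann
    show x * (t : R) = 0
    simpa [smul_eq_mul, mul_comm] using this
  set φ : (LinearMap.range h : Ideal R) →ₗ[R] R :=
    (Submodule.liftQ (LinearMap.ker h) g hle).comp h.quotKerEquivRange.symm.toLinearMap with hφ
  obtain ⟨g', hg'⟩ := hB (LinearMap.range h) φ
  set d := g' 1 with hd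
  have key : ∀ t : A, x * (t : R) = d * c * (t : R) := by
    intro t
    have hmem : c * (t : R) ∈ LinearMap.range h := ⟨t, rfl⟩
    have e1 : g' (c * (t : R)) = φ ⟨c * (t : R), hmem⟩ := hg' _ hmem
    have e2 : φ ⟨c * (t : R), hmem⟩ = g t := by
      have : (⟨c * (t : R), hmem⟩ : LinearMap.range h) = ⟨h t, LinearMap.mem_range_self h t⟩ := rfl
      rw [hφ, this]
      simp [h.quotKerEquivRange_symm_apply_image, Submodule.liftQ_apply]
    have e3 : g' (c * (t : R)) = (c * (t : R)) * d := by
      have : g' (c * (t : R)) = (c * (t : R)) • g' 1 := by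
        rw [← map_smul]; simp
      simpa [smul_eq_mul, mul_comm] using this
    have : x * (t : R) = g t := rfl
    rw [this, ← e2, ← e1, e3]; ring
  have hmemB : x - d * c ∈ B := by
    rw [← hB2, Submodule.mem_annihilator]
    intro t ht
    have := key ⟨t, ht⟩
    simp only [smul_eq_mul, sub_mul]
    rw [this]; ring
  have : x = d * c + (x - d * c) := by ring
  rw [this]
  exact Submodule.add_mem _
    (Submodule.mem_sup_left (Ideal.mem_span_singleton'.mpr ⟨d, rfl⟩))
    (Submodule.mem_sup_right hmemB)

/-- In a commutative self-injective ring, every finitely generated ideal equals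
its double annihilator. -/
theorem double_annihilator_of_fg (R : Type*) [CommRing R]
    (hR : Module.Injective R R) (J : Ideal R) (hJ : J.FG) :
    Submodule.annihilator (Submodule.annihilator J) = J := by
  classical
  have hB : Module.Baer R R := Module.Baer.of_injective hR
  obtain ⟨s, rfl⟩ := hJ
  induction s using Finset.induction_on with
  | empty =>
      simp only [Finset.coe_empty, Ideal.span_empty]
      rw [Submodule.annihilator_bot]
      refine le_antisymm ?_ bot_le
      intro a ha
      have := Submodule.mem_annihilator.mp ha 1 trivial
      simpa using this
  | insert c s hc ih =>
      rw [Finset.coe_insert, Ideal.span_insert]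
      exact ann_ann_step hB ih _
end

section
/- Let R be a commutative self-injective ring and let I, J be ideals of R. Then ann_R(I + J) = ann_R(I) ∩ ann_R(J) and ann_R(I ∩ J) = ann_R(I) + ann_R(J). -/
/-- Annihilators of sums and intersections of ideals in a self-injective ring. -/
theorem annihilator_sup_inf (R : Type*) [CommRing R]
    (hR : Module.Injective R R) (I J : Ideal R) :
    Submodule.annihilator (I ⊔ J) =
      Submodule.annihilator I ⊓ Submodule.annihilator J ∧
    Submodule.annihilator (I ⊓ J) =
      Submodule.annihilator I ⊔ Submodule.annihilator J := by
  constructor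
  · apply le_antisymm
    · exact le_inf (Submodule.annihilator_mono le_sup_left)
        (Submodule.annihilator_mono le_sup_right)
    · intro a ha
      rw [Submodule.mem_inf] at ha
      rw [Submodule.mem_annihilator]
      intro n hn
      obtain ⟨x, hx, y, hy, rfl⟩ := Submodule.mem_sup.mp hn
      rw [smul_add, Submodule.mem_annihilator.mp ha.1 x hx,
        Submodule.mem_annihilator.mp ha.2 y hy, add_zero]
  · apply le_antisymm
    · -- hard direction: uses self-injectivity
      intro a ha
      -- q : I × J →ₗ R, (x, y) ↦ x + y, with range inside I ⊔ J
      set q : (I × J) →ₗ[R] R :=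
        I.subtype.comp (LinearMap.fst R I J) + J.subtype.comp (LinearMap.snd R I J) with hq
      have hqapp : ∀ v : I × J, q v = (v.1 : R) + (v.2 : R) := fun v => rfl
      have hqrange : ∀ v : I × J, q v ∈ I ⊔ J := fun v =>
        Submodule.add_mem_sup v.1.2 v.2.2
      set q' : (I × J) →ₗ[R] (I ⊔ J : Ideal R) := q.codRestrict _ hqrange with hq'
      have hq'surj : Function.Surjective q' := by
        rintro ⟨z, hz⟩
        obtain ⟨x, hx, y, hy, rfl⟩ := Submodule.mem_sup.mp hz
        exact ⟨(⟨x, hx⟩, ⟨y, hy⟩), rfl⟩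
      -- p : I × J →ₗ R, (x, y) ↦ a * x
      set p : (I × J) →ₗ[R] R :=
        a • (I.subtype.comp (LinearMap.fst R I J)) with hp
      have hker : LinearMap.ker q' ≤ LinearMap.ker p := by
        rintro ⟨x, y⟩ hv
        have h0 : (x : R) + (y : R) = 0 := by
          have := congrArg (Subtype.val) (LinearMap.mem_ker.mp hv)
          simpa [hq', hqapp, Subtype.ext_iff] using this
        have hxIJ : (x : R) ∈ I ⊓ J := ⟨x.2, by
          have hxy : (x : R) = -(y : R) := eq_neg_of_add_eq_zero_left h0
          rw [hxy]; exact neg_mem y.2⟩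
        simp only [LinearMap.mem_ker, hp, LinearMap.smul_apply, LinearMap.comp_apply,
          LinearMap.fst_apply, Submodule.coe_subtype]
        exact Submodule.mem_annihilator.mp ha _ hxIJ
      -- factor p through q'
      set g : (I ⊔ J : Ideal R) →ₗ[R] R :=
        ((LinearMap.ker q').liftQ p hker).comp
          (q'.quotKerEquivOfSurjective hq'surj).symm.toLinearMap with hg
      have hgq : ∀ v : I × J, g (q' v) = p v := by
        intro v
        have : (q'.quotKerEquivOfSurjective hq'surj).symm (q' v) =
            Submodule.Quotient.mk v := by
          apply (q'.quotKerEquivOfSurjective hq'surj).injective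
          simp [LinearMap.quotKerEquivOfSurjective]
        simp [hg, this]
      -- extend g along the inclusion of I ⊔ J into R
      obtain ⟨h, hh⟩ := hR.out (I ⊔ J : Ideal R).subtype
        (Submodule.injective_subtype _) g
      set r := h 1 with hr
      have hhx : ∀ x : R, h x = x * r := by
        intro x
        calc h x = h (x • 1) := by rw [smul_eq_mul, mul_one]
        _ = x • h 1 := map_smul h x 1
        _ = x * r := by rw [smul_eq_mul, hr]
      have haI : ∀ x ∈ I, a * x = x * r := by
        intro x hx
        have h1 : q' (⟨x, hx⟩, 0) = (⟨x, Submodule.mem_sup_left hx⟩ : (I ⊔ J : Ideal R)) := by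
          apply Subtype.ext; simp [hq', hqapp]
        have := hgq (⟨x, hx⟩, 0)
        rw [h1] at this
        have h2 : h x = g ⟨x, Submodule.mem_sup_left hx⟩ := hh ⟨x, Submodule.mem_sup_left hx⟩
        rw [this, hhx x] at h2
        simpa [hp] using h2.symm
      have hrJ : ∀ y ∈ J, y * r = 0 := by
        intro y hy
        have h1 : q' (0, ⟨y, hy⟩) = (⟨y, Submodule.mem_sup_right hy⟩ : (I ⊔ J : Ideal R)) := by
          apply Subtype.ext; simp [hq', hqapp]
        have := hgq (0, ⟨y, hy⟩)
        rw [h1] at this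
        have h2 : h y = g ⟨y, Submodule.mem_sup_right hy⟩ := hh ⟨y, Submodule.mem_sup_right hy⟩
        rw [this, hhx y] at h2
        simpa [hp] using h2
      have : a = (a - r) + r := by ring
      rw [this]
      apply Submodule.add_mem_sup
      · rw [Submodule.mem_annihilator]
        intro x hx
        rw [smul_eq_mul, sub_mul, haI x hx, mul_comm, sub_self]
      · rw [Submodule.mem_annihilator]
        intro y hy
        rw [smul_eq_mul, mul_comm]
        exact hrJ y hy
    · exact sup_le (Submodule.annihilator_mono inf_le_left)
        (Submodule.annihilator_mono inf_le_right)
end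

section
/- Let R be a commutative local self-injective ring and let I, J be nonzero ideals of R. Then I ∩ J is nonzero. -/
/-- In a local self-injective commutative ring, two nonzero ideals have nonzero
intersection. -/
theorem inf_ne_bot_of_local_selfinjective (R : Type*) [CommRing R] [IsLocalRing R]
    (hR : Module.Injective R R) (I J : Ideal R) (hI : I ≠ ⊥) (hJ : J ≠ ⊥) :
    I ⊓ J ≠ ⊥ := by
  intro hIJ
  -- the coprod of the inclusions is injective since I ⊓ J = ⊥
  set e : (I × J) →ₗ[R] R := (I.subtype).coprod (J.subtype) with he
  have hinj : Function.Injective e := by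
    rw [← LinearMap.ker_eq_bot]
    ext ⟨i, j⟩
    simp only [LinearMap.mem_ker, Submodule.mem_bot, he, LinearMap.coprod_apply,
      Submodule.coe_subtype, Prod.mk_eq_zero]
    constructor
    · intro h
      have hi : (i : R) = -(j : R) := eq_neg_of_add_eq_zero_left h
      have hmem : (i : R) ∈ I ⊓ J := ⟨i.2, by rw [hi]; exact neg_mem j.2⟩
      rw [hIJ, Submodule.mem_bot] at hmem
      have hj : (j : R) = 0 := by
        have := hmem
        rw [hi, neg_eq_zero] at this
        exact this
      exact ⟨Subtype.ext hmem, Subtype.ext hj⟩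
    · rintro ⟨h1, h2⟩
      rw [h1, h2]
      simp
  -- projection onto I
  set g : (I × J) →ₗ[R] R := I.subtype.comp (LinearMap.fst R I J) with hg
  obtain ⟨h, hh⟩ := hR.out e hinj g
  set c : R := h 1 with hc
  have hmul : ∀ x : R, h x = x * c := by
    intro x
    calc h x = h (x • 1) := by rw [smul_eq_mul, mul_one]
    _ = x • h 1 := by rw [map_smul]
    _ = x * c := by rw [smul_eq_mul, hc]
  have hI' : ∀ i : I, (i : R) * c = (i : R) := by
    intro i
    have := hh (i, 0)
    simp only [he, hg, LinearMap.coprod_apply, Submodule.coe_subtype, ZeroMemClass.coe_zero,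
      add_zero, LinearMap.comp_apply, LinearMap.fst_apply] at this
    rw [hmul] at this
    exact this
  have hJ' : ∀ j : J, (j : R) * c = 0 := by
    intro j
    have := hh (0, j)
    simp only [he, hg, LinearMap.coprod_apply, Submodule.coe_subtype, ZeroMemClass.coe_zero,
      zero_add, LinearMap.comp_apply, LinearMap.fst_apply] at this
    rw [hmul] at this
    exact this
  obtain ⟨i0, hi0I, hi0⟩ := Submodule.exists_mem_ne_zero_of_ne_bot hI
  obtain ⟨j0, hj0J, hj0⟩ := Submodule.exists_mem_ne_zero_of_ne_bot hJ
  rcases IsLocalRing.isUnit_or_isUnit_one_sub_self c with hu | hu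
  · -- c unit, but j0 * c = 0
    have := hJ' ⟨j0, hj0J⟩
    exact hj0 ((IsUnit.mul_left_eq_zero hu).mp this)
  · -- 1 - c unit, but i0 * (1 - c) = 0
    have h1 : i0 * (1 - c) = 0 := by
      have := hI' ⟨i0, hi0I⟩
      simp only [mul_sub, mul_one] at *
      rw [this]
      ring
    exact hi0 ((IsUnit.mul_left_eq_zero hu).mp h1)
end

section
/- Let R be a commutative self-injective ring and a ∈ R. Then the quotient ring Q = R/ann_R(a) is self-injective (injective as a Q-module). -/
section Aux

variable {R : Type*} [CommRing R]

/-- Double annihilator lemma: in a self-injective commutative ring, if `c` is killed by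
everything that kills `a`, then `c ∈ (a)`. -/
lemma ann_ann_mem (hR : Module.Injective R R) (a c : R)
    (hc : ∀ t : R, t * a = 0 → t * c = 0) : ∃ b : R, c = a * b := by
  classical
  set S : Submodule R R := Ideal.span {a} with hS
  have key : ∀ x : R, x ∈ S → ∃ r : R, r * a = x := fun x hx =>
    Ideal.mem_span_singleton'.1 hx
  choose w hw using key
  have wspec : ∀ (x : R) (hx : x ∈ S) (r : R), r * a = x → w x hx * c = r * c := by
    intro x hx r hr
    have h0 : (w x hx - r) * a = 0 := by rw [sub_mul, hw x hx, hr, sub_self]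
    have := hc _ h0
    rw [sub_mul, sub_eq_zero] at this
    exact this
  -- define a linear map S → R
  let g : S →ₗ[R] R :=
    { toFun := fun x => w x.1 x.2 * c
      map_add' := by
        intro x y
        have h1 : (w x.1 x.2 + w y.1 y.2) * a = ((x + y : S) : R) := by
          push_cast
          rw [add_mul, hw, hw]
        rw [wspec _ (x + y).2 _ h1, add_mul]
      map_smul' := by
        intro r x
        have h1 : (r * w x.1 x.2) * a = ((r • x : S) : R) := by
          push_cast
          rw [mul_assoc, hw, smul_eq_mul]
        rw [wspec _ (r • x).2 _ h1, smul_eq_mul, mul_assoc]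
        rfl }
  obtain ⟨h, hh⟩ := hR.out S.subtype Subtype.val_injective g
  refine ⟨h 1, ?_⟩
  have ha : a ∈ S := Ideal.subset_span rfl
  have h1 : h a = c := by
    have := hh ⟨a, ha⟩
    simp only [Submodule.subtype_apply] at this
    rw [this]
    show w a ha * c = c
    rw [wspec a ha 1 (one_mul a), one_mul]
  calc c = h a := h1.symm
    _ = h (a • 1) := by rw [smul_eq_mul, mul_one]
    _ = a • h 1 := by rw [map_smul]
    _ = a * h 1 := rfl

end Aux

/-- If R is commutative self-injective and a ∈ R, then R/ann(a) is self-injective. -/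
theorem quotient_by_annihilator_selfinjective (R : Type*) [CommRing R]
    (hR : Module.Injective R R) (a : R) :
    Module.Injective (R ⧸ Submodule.annihilator (Ideal.span {a}))
      (R ⧸ Submodule.annihilator (Ideal.span {a})) := by
  classical
  set I : Ideal R := Submodule.annihilator (Ideal.span {a}) with hI
  have memI : ∀ t : R, t ∈ I ↔ t * a = 0 := by
    intro t
    rw [hI, Submodule.mem_annihilator]
    constructor
    · intro h
      exact h a (Ideal.subset_span rfl)
    · intro h n hn
      obtain ⟨r, hr⟩ := Ideal.mem_span_singleton'.1 hn
      rw [← hr]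
      show t * (r * a) = 0
      rw [mul_comm r a, ← mul_assoc, h, zero_mul]
  -- the injective map μ : R/I → R, mk r ↦ a * r
  have hker : I ≤ LinearMap.ker (a • (LinearMap.id : R →ₗ[R] R)) := by
    intro t ht
    simp only [LinearMap.mem_ker, LinearMap.smul_apply, LinearMap.id_apply, smul_eq_mul]
    rw [mul_comm]
    exact (memI t).1 ht
  let μ : (R ⧸ I) →ₗ[R] R := Submodule.liftQ I (a • (LinearMap.id : R →ₗ[R] R)) hker
  have μ_mk : ∀ r : R, μ (Submodule.Quotient.mk r) = a * r := fun r => rfl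
  have μ_inj : Function.Injective μ := by
    rw [← LinearMap.ker_eq_bot]
    refine Submodule.ker_liftQ_eq_bot I _ hker (le_of_eq ?_)
    ext t
    simp only [LinearMap.mem_ker, LinearMap.smul_apply, LinearMap.id_apply, smul_eq_mul, memI t]
    rw [mul_comm]
  apply Module.Baer.injective
  intro J' g
  -- pull back to an ideal of R
  set mkQ : R →+* (R ⧸ I) := Ideal.Quotient.mk I with hmk
  have mk_eq : ∀ r : R, mkQ r = Submodule.Quotient.mk r := fun r => rfl
  set J : Ideal R := J'.comap mkQ with hJ
  have hJmem : ∀ r : R, r ∈ J ↔ mkQ r ∈ J' := fun r => Iff.rfl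
  -- R-linear map φ : J → R, x ↦ μ (g (mk x))
  have μ_mul : ∀ (r : R) (y : R ⧸ I), μ (mkQ r * y) = r * μ y := by
    intro r y
    obtain ⟨s, rfl⟩ := Submodule.Quotient.mk_surjective I y
    rw [μ_mk]
    have h2 : mkQ r * Submodule.Quotient.mk s = (Submodule.Quotient.mk (r * s) : R ⧸ I) := rfl
    rw [h2, μ_mk]
    ring
  let φ : J →ₗ[R] R :=
    { toFun := fun x => μ (g ⟨mkQ x.1, (hJmem x.1).1 x.2⟩)
      map_add' := by
        intro x y
        have e : (⟨mkQ ((x + y : J) : R), (hJmem _).1 (x + y).2⟩ : J') =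
            ⟨mkQ (x : R), (hJmem _).1 x.2⟩ + ⟨mkQ (y : R), (hJmem _).1 y.2⟩ := by
          ext
          push_cast [map_add]
          rfl
        rw [e, map_add, map_add]
      map_smul' := by
        intro r x
        have e : (⟨mkQ ((r • x : J) : R), (hJmem _).1 (r • x).2⟩ : J') =
            mkQ r • ⟨mkQ (x : R), (hJmem _).1 x.2⟩ := by
          ext
          show mkQ (r • (x : R)) = mkQ r * mkQ (x : R)
          rw [smul_eq_mul, map_mul]
        rw [e, map_smul]
        simp only [RingHom.id_apply]
        show μ (mkQ r * _) = r • _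
        rw [μ_mul]
        rfl }
  obtain ⟨h, hh⟩ := hR.out J.subtype Subtype.val_injective φ
  set c : R := h 1 with hc
  have hxc : ∀ (x : R) (hx : x ∈ J), x * c = μ (g ⟨mkQ x, (hJmem x).1 hx⟩) := by
    intro x hx
    have h3 := hh ⟨x, hx⟩
    simp only [Submodule.subtype_apply] at h3
    calc x * c = x • h 1 := rfl
      _ = h (x • 1) := (map_smul h x 1).symm
      _ = h x := by rw [smul_eq_mul, mul_one]
      _ = φ ⟨x, hx⟩ := h3
      _ = μ (g ⟨mkQ x, (hJmem x).1 hx⟩) := rfl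
  -- c is killed by ann(a)
  have hcann : ∀ t : R, t * a = 0 → t * c = 0 := by
    intro t ht
    have htI : t ∈ I := (memI t).2 ht
    have htJ : t ∈ J := by
      rw [hJmem]
      have h4 : mkQ t = 0 := Ideal.Quotient.eq_zero_iff_mem.2 htI
      rw [h4]
      exact J'.zero_mem
    have h5 := hxc t htJ
    have hzero : (⟨mkQ t, (hJmem t).1 htJ⟩ : J') = 0 := by
      ext
      exact Ideal.Quotient.eq_zero_iff_mem.2 htI
    rw [hzero, map_zero, map_zero] at h5
    exact h5
  obtain ⟨b, hb⟩ := ann_ann_mem hR a c hcann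
  -- the extension: q ↦ q * mk b
  refine ⟨LinearMap.toSpanSingleton (R ⧸ I) (R ⧸ I) (mkQ b), ?_⟩
  intro x hx
  obtain ⟨r, rfl⟩ := Ideal.Quotient.mk_surjective x
  have hrJ : r ∈ J := hx
  apply μ_inj
  have lhs : μ (LinearMap.toSpanSingleton (R ⧸ I) (R ⧸ I) (mkQ b) (mkQ r)) = r * c := by
    show μ (mkQ r • mkQ b) = r * c
    rw [smul_eq_mul, μ_mul, mk_eq b, μ_mk, ← hb]
  rw [lhs, hxc r hrJ]
end

section
/- Let R be a Noetherian commutative ring such that for every ideal J of R we have ann_R(ann_R(J)) = J. Then R is Artinian. -/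
/-- A Noetherian commutative ring satisfying the double annihilator condition for
all ideals is Artinian. -/
theorem artinian_of_double_annihilator (R : Type*) [CommRing R] [IsNoetherianRing R]
    (h : ∀ J : Ideal R, Submodule.annihilator (Submodule.annihilator J) = J) :
    IsArtinianRing R := by
  rw [isArtinianRing_iff, ← monotone_stabilizes_iff_artinian]
  intro f
  obtain ⟨n, hn⟩ := (monotone_stabilizes_iff_noetherian).mpr (inferInstance : IsNoetherian R R)
    ⟨fun k => Submodule.annihilator (OrderDual.ofDual (f k)),
      fun a b hab => Submodule.annihilator_mono (f.monotone hab)⟩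
  refine ⟨n, fun m hm => ?_⟩
  have := congrArg Submodule.annihilator (hn m hm)
  change Submodule.annihilator (Submodule.annihilator (OrderDual.ofDual (f n))) =
    Submodule.annihilator (Submodule.annihilator (OrderDual.ofDual (f m))) at this
  simpa [h] using this
end

section
/- Let R be a Noetherian commutative ring such that ann_R(ann_R(J)) = J for every ideal J. Then R is self-injective, i.e. R is injective as an R-module. -/
open Ideal Submodule

lemma key_double_ann {R : Type*} [CommRing R]
    (h : ∀ J : Ideal R, Submodule.annihilator (Submodule.annihilator J) = J)
    (J : Ideal R) (b c : R) (hc : ∀ x : R, x * b ∈ J → x * c = 0) :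
    ∃ s, s ∈ Submodule.annihilator J ∧ c = s * b := by
  have h1 : Submodule.annihilator (Submodule.annihilator J * Ideal.span {b}) ≤
      Submodule.annihilator (Ideal.span {c}) := by
    intro y hy
    rw [Submodule.mem_annihilator] at hy ⊢
    have hyb : y * b ∈ J := by
      rw [← h J, Submodule.mem_annihilator]
      intro a ha
      have := hy (a * b) (Ideal.mul_mem_mul ha (Ideal.mem_span_singleton_self b))
      rw [smul_eq_mul] at this ⊢
      linear_combination this
    intro n hn
    rw [Ideal.mem_span_singleton] at hn
    obtain ⟨d, rfl⟩ := hn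
    rw [smul_eq_mul, ← mul_assoc, hc y hyb, zero_mul]
  have h2 : Ideal.span {c} ≤ Submodule.annihilator J * Ideal.span {b} := by
    calc Ideal.span {c}
        = Submodule.annihilator (Submodule.annihilator (Ideal.span {c})) :=
          (h _).symm
      _ ≤ Submodule.annihilator
            (Submodule.annihilator (Submodule.annihilator J * Ideal.span {b})) :=
          Submodule.annihilator_mono h1
      _ = Submodule.annihilator J * Ideal.span {b} := h _
  have := h2 (Ideal.mem_span_singleton_self c)
  rw [Ideal.mem_mul_span_singleton] at this
  obtain ⟨s, hs, hsb⟩ := this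
  exact ⟨s, hs, hsb.symm⟩

/-- A Noetherian commutative ring satisfying the double annihilator condition for
all ideals is self-injective. -/
theorem selfinjective_of_double_annihilator (R : Type*) [CommRing R] [IsNoetherianRing R]
    (h : ∀ J : Ideal R, Submodule.annihilator (Submodule.annihilator J) = J) :
    Module.Injective R R := by
  apply Module.Baer.injective
  classical
  have main : ∀ s : Finset R, ∀ f : (Ideal.span (s : Set R)) →ₗ[R] R,
      ∃ r : R, ∀ x (hx : x ∈ Ideal.span (s : Set R)), f ⟨x, hx⟩ = r * x := by
    intro s
    induction s using Finset.induction_on with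
    | empty =>
      intro f
      refine ⟨0, ?_⟩
      intro x hx
      have hx0 : (⟨x, hx⟩ : Ideal.span ((∅ : Finset R) : Set R)) = 0 := by
        ext
        simpa using hx
      rw [hx0, map_zero, zero_mul]
    | @insert b s hb ih =>
      intro f
      have hJle : Ideal.span (s : Set R) ≤ Ideal.span ((insert b s : Finset R) : Set R) := by
        apply Ideal.span_mono; intro x hx; simp [hx]
      have hbmem : b ∈ Ideal.span ((insert b s : Finset R) : Set R) :=
        Ideal.subset_span (by simp)
      obtain ⟨r, hr⟩ := ih (f.comp (Submodule.inclusion hJle))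
      set J := Ideal.span (s : Set R) with hJ
      set c : R := f ⟨b, hbmem⟩ - r * b with hcdef
      have hc : ∀ x : R, x * b ∈ J → x * c = 0 := by
        intro x hxb
        have h1 : f ⟨x * b, hJle hxb⟩ = r * (x * b) := hr (x * b) hxb
        have h2 : f ⟨x * b, hJle hxb⟩ = x * f ⟨b, hbmem⟩ := by
          have e : (⟨x * b, hJle hxb⟩ : Ideal.span ((insert b s : Finset R) : Set R))
              = x • ⟨b, hbmem⟩ := by
            ext; simp [smul_eq_mul]
          rw [e, map_smul, smul_eq_mul]
        rw [hcdef, mul_sub]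
        rw [← h2, h1]
        ring
      obtain ⟨t, ht, htc⟩ := key_double_ann h J b c hc
      refine ⟨r + t, ?_⟩
      intro x hx
      have hx' := hx
      rw [Finset.coe_insert, Ideal.span_insert] at hx'
      obtain ⟨u, hu, v, hv, hxe⟩ := Submodule.mem_sup.mp hx'
      rw [Ideal.mem_span_singleton] at hu
      obtain ⟨a, rfl⟩ := hu
      have e1 : (⟨x, hx⟩ : Ideal.span ((insert b s : Finset R) : Set R))
          = a • ⟨b, hbmem⟩ + Submodule.inclusion hJle ⟨v, hv⟩ := by
        ext
        simp only [Submodule.coe_add, SetLike.val_smul, smul_eq_mul,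
          Submodule.coe_inclusion, ← hxe]
        ring
      have e2 : f (Submodule.inclusion hJle ⟨v, hv⟩) = r * v := hr v hv
      have htv : t * v = 0 := by
        have := Submodule.mem_annihilator.mp ht v hv
        rwa [smul_eq_mul] at this
      have hfb : f ⟨b, hbmem⟩ = c + r * b := by rw [hcdef]; ring
      rw [e1, map_add, map_smul, smul_eq_mul, e2, hfb, ← hxe]
      linear_combination a * htc - htv
  intro I g
  obtain ⟨s, hs⟩ := (IsNoetherian.noetherian I)
  subst hs
  obtain ⟨r, hr⟩ := main s g
  refine ⟨r • LinearMap.id, ?_⟩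
  intro x hx
  have := (hr x hx).symm
  simpa [smul_eq_mul] using this
end

section
/- Let K be a field, let R be a commutative graded K-algebra with R_i = 0 for i < 0 and i > d, R_0 = K, each R_i finite-dimensional, equipped with a K-linear map θ : R_d → K such that (a,b) ↦ θ(ab) is a perfect pairing between R_i and R_{d-i} for 0 ≤ i ≤ d (a Poincaré duality algebra). Then R is injective as a graded R-module over itself. -/
/-- A Poincaré duality algebra (a ℤ-graded commutative K-algebra, concentrated in
degrees 0..d, with R₀ = K, finite-dimensional pieces, and a perfect pairing
R_i × R_{d-i} → K given by θ(ab)) is injective as a graded module over itself.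
Injectivity is expressed via the graded Baer criterion: every degree-shifting
homomorphism from a homogeneous ideal to the ring is given by multiplication by a
homogeneous element. -/
theorem poincare_duality_selfinjective (K : Type*) [Field K]
    (A : Type*) [CommRing A] [Algebra K A]
    (𝒜 : ℤ → Submodule K A) [GradedAlgebra 𝒜] (d : ℤ) (hd : 0 ≤ d)
    (hneg : ∀ i : ℤ, i < 0 → 𝒜 i = ⊥)
    (hbig : ∀ i : ℤ, d < i → 𝒜 i = ⊥)
    (h0 : 𝒜 0 = Submodule.span K {1})
    (hfin : ∀ i : ℤ, FiniteDimensional K (𝒜 i))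
    (θ : 𝒜 d →ₗ[K] K)
    (hperf : ∀ (i : ℤ), 0 ≤ i → i ≤ d → ∀ (a : A) (ha : a ∈ 𝒜 i),
      (∀ (b : A) (hb : b ∈ 𝒜 (d - i)),
        θ ⟨a * b, by
          rw [show d = i + (d - i) by ring]
          exact SetLike.mul_mem_graded ha hb⟩ = 0) → a = 0) :
    ∀ (J : Ideal A), Ideal.IsHomogeneous 𝒜 J →
      ∀ (e : ℤ) (φ : J →ₗ[A] A),
        (∀ (k : ℤ) (a : A) (haJ : a ∈ J), a ∈ 𝒜 k → φ ⟨a, haJ⟩ ∈ 𝒜 (k + e)) →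
        ∃ m ∈ 𝒜 e, ∀ (a : A) (haJ : a ∈ J), φ ⟨a, haJ⟩ = a * m := by
  classical
  intro J hJ e φ hφ
  haveI := hfin
  -- the degree-`d` projection, as a `K`-linear map
  let pd : A →ₗ[K] 𝒜 d :=
    (DirectSum.component K ℤ (fun i => 𝒜 i) d) ∘ₗ (DirectSum.decomposeLinearEquiv 𝒜).toLinearMap
  have pd_eq : ∀ y : A, pd y = DirectSum.decompose 𝒜 y d := fun y => rfl
  -- nondegeneracy of the total pairing
  have hnd : ∀ c : A, (∀ x : A, θ (DirectSum.decompose 𝒜 (x * c) d) = 0) → c = 0 := by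
    intro c hc
    have hcomp : ∀ i : ℤ, (DirectSum.decompose 𝒜 c i : A) = 0 := by
      intro i
      by_cases hi0 : 0 ≤ i
      · by_cases hid : i ≤ d
        · refine hperf i hi0 hid _ (DirectSum.decompose 𝒜 c i).2 ?_
          intro b hb
          have h1 : (DirectSum.decompose 𝒜 (b * c) (d - i + i) : A)
              = b * (DirectSum.decompose 𝒜 c i : A) :=
            DirectSum.coe_decompose_mul_add_of_left_mem 𝒜 hb
          rw [show d - i + i = d by ring] at h1
          have h2 := hc b
          convert h2 using 2
          exact Subtype.ext (by rw [h1]; exact mul_comm _ _)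
        · have hb : (DirectSum.decompose 𝒜 c i : A) ∈ (⊥ : Submodule K A) := by
            rw [← hbig i (by omega)]; exact (DirectSum.decompose 𝒜 c i).2
          simpa using hb
      · have hb : (DirectSum.decompose 𝒜 c i : A) ∈ (⊥ : Submodule K A) := by
          rw [← hneg i (by omega)]; exact (DirectSum.decompose 𝒜 c i).2
        simpa using hb
    calc c = ∑ i ∈ (DirectSum.decompose 𝒜 c).support, (DirectSum.decompose 𝒜 c i : A) :=
          (DirectSum.sum_support_decompose 𝒜 c).symm
      _ = 0 := Finset.sum_eq_zero fun i _ => hcomp i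
  -- A is finite dimensional over K
  haveI hfA : FiniteDimensional K A := by
    have hint : DirectSum.IsInternal 𝒜 := DirectSum.Decomposition.isInternal 𝒜
    have h1 : iSup 𝒜 = ⊤ := hint.submodule_iSup_eq_top
    have h2 : (⊤ : Submodule K A) ≤ (Finset.Icc 0 d).sup 𝒜 := by
      rw [← h1]
      refine iSup_le fun i => ?_
      by_cases hi : i ∈ Finset.Icc 0 d
      · exact Finset.le_sup hi
      · have hbot : 𝒜 i = ⊥ := by
          simp only [Finset.mem_Icc, not_and, not_le] at hi
          rcases lt_or_ge i 0 with h | h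
          · exact hneg i h
          · exact hbig i (hi h)
        rw [hbot]; exact bot_le
    haveI : FiniteDimensional K ↥((Finset.Icc 0 d).sup 𝒜) :=
      Submodule.finiteDimensional_finset_sup _ _
    haveI : FiniteDimensional K (⊤ : Submodule K A) :=
      Submodule.finiteDimensional_of_le h2
    exact Submodule.topEquiv.finiteDimensional
  -- the duality map
  let Φ : A →ₗ[K] Module.Dual K A :=
    LinearMap.mk₂ K (fun u v => θ (pd (u * v)))
      (fun u u' v => by simp only [add_mul, map_add])
      (fun k u v => by simp only [smul_mul_assoc, map_smul])
      (fun u v v' => by simp only [mul_add, map_add])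
      (fun k u v => by simp only [mul_smul_comm, map_smul])
  have hΦinj : Function.Injective Φ := by
    intro u v huv
    rw [← sub_eq_zero]
    refine hnd (u - v) fun x => ?_
    have hx : Φ u x = Φ v x := by rw [huv]
    have h1 : θ (pd ((u - v) * x)) = 0 := by
      rw [sub_mul, map_sub, map_sub]
      exact sub_eq_zero.mpr hx
    rw [← pd_eq, mul_comm]
    exact h1
  have hΦsurj : Function.Surjective Φ :=
    (LinearMap.injective_iff_surjective_of_finrank_eq_finrank
      (Subspace.dual_finrank_eq (V := A)).symm).mp hΦinj
  -- the functional on J induced by φ, extended to A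
  let g : (J.restrictScalars K) →ₗ[K] K :=
    { toFun := fun x => θ (pd (φ ⟨x.1, x.2⟩))
      map_add' := by
        rintro ⟨x, hx⟩ ⟨y, hy⟩
        have h : (⟨x + y, J.add_mem hx hy⟩ : J) = ⟨x, hx⟩ + ⟨y, hy⟩ := rfl
        show θ (pd (φ ⟨x + y, J.add_mem hx hy⟩)) = _
        rw [h, map_add, map_add, map_add]
      map_smul' := by
        rintro k ⟨x, hx⟩
        have h : (⟨k • x, Submodule.smul_mem _ k hx⟩ : J)
            = (algebraMap K A k) • (⟨x, hx⟩ : J) :=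
          Subtype.ext (algebraMap_smul A k x).symm
        show θ (pd (φ ⟨k • x, Submodule.smul_mem _ k hx⟩)) = _
        rw [h, map_smul, algebraMap_smul, map_smul, map_smul]
        rfl }
  obtain ⟨p, hp⟩ := Submodule.exists_isCompl (J.restrictScalars K : Submodule K A)
  let f : A →ₗ[K] K := g ∘ₗ Submodule.linearProjOfIsCompl _ p hp
  have hf : ∀ (x : A) (hx : x ∈ J), f x = θ (pd (φ ⟨x, hx⟩)) := by
    intro x hx
    have hproj : (Submodule.linearProjOfIsCompl _ p hp) x
        = (⟨x, hx⟩ : J.restrictScalars K) :=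
      Submodule.linearProjOfIsCompl_apply_left hp ⟨x, hx⟩
    show g ((Submodule.linearProjOfIsCompl _ p hp) x) = _
    rw [hproj]
    rfl
  obtain ⟨m₀, hm₀⟩ := hΦsurj f
  -- ungraded Baer property: φ is multiplication by m₀
  have key : ∀ (a : A) (ha : a ∈ J), φ ⟨a, ha⟩ = a * m₀ := by
    intro a ha
    have hzero : ∀ x : A, θ (DirectSum.decompose 𝒜 (x * (φ ⟨a, ha⟩ - a * m₀)) d) = 0 := by
      intro x
      have hxφ : x * φ ⟨a, ha⟩ = φ ⟨x * a, J.mul_mem_left x ha⟩ := by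
        have hsm : (⟨x * a, J.mul_mem_left x ha⟩ : J) = x • ⟨a, ha⟩ := Subtype.ext rfl
        rw [hsm, map_smul]; rfl
      have h1 : θ (pd (x * φ ⟨a, ha⟩)) = f (x * a) := by
        rw [hxφ, hf (x * a) (J.mul_mem_left x ha)]
      have h2 : f (x * a) = θ (pd (m₀ * (x * a))) := by rw [← hm₀]; rfl
      have h3 : x * (a * m₀) = m₀ * (x * a) := by ring
      rw [← pd_eq, mul_sub, map_sub, map_sub, h1, h2, h3, sub_self]
    have := hnd _ hzero
    exact sub_eq_zero.mp this
  -- graded refinement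
  refine ⟨(DirectSum.decompose 𝒜 m₀ e : A), (DirectSum.decompose 𝒜 m₀ e).2, ?_⟩
  have hhom : ∀ (k : ℤ) (b : A) (hbJ : b ∈ J), b ∈ 𝒜 k →
      φ ⟨b, hbJ⟩ = b * (DirectSum.decompose 𝒜 m₀ e : A) := by
    intro k b hbJ hbk
    have h1 : φ ⟨b, hbJ⟩ ∈ 𝒜 (k + e) := hφ k b hbJ hbk
    have h2 : (DirectSum.decompose 𝒜 (φ ⟨b, hbJ⟩) (k + e) : A) = φ ⟨b, hbJ⟩ :=
      DirectSum.decompose_of_mem_same 𝒜 h1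
    have h3 : (DirectSum.decompose 𝒜 (b * m₀) (k + e) : A)
        = b * (DirectSum.decompose 𝒜 m₀ e : A) :=
      DirectSum.coe_decompose_mul_add_of_left_mem 𝒜 hbk
    rw [← h2, key b hbJ, h3]
  intro a haJ
  have hmem : ∀ i, (DirectSum.decompose 𝒜 a i : A) ∈ J := fun i => hJ i haJ
  have hsum : ∑ i ∈ (DirectSum.decompose 𝒜 a).support, (DirectSum.decompose 𝒜 a i : A) = a :=
    DirectSum.sum_support_decompose 𝒜 a
  have hsub : (⟨a, haJ⟩ : J) = ∑ i ∈ (DirectSum.decompose 𝒜 a).support,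
      (⟨(DirectSum.decompose 𝒜 a i : A), hmem i⟩ : J) := by
    apply Subtype.ext
    rw [AddSubmonoidClass.coe_finset_sum]
    exact hsum.symm
  rw [hsub, map_sum]
  calc (∑ i ∈ (DirectSum.decompose 𝒜 a).support,
          φ (⟨(DirectSum.decompose 𝒜 a i : A), hmem i⟩ : J))
      = ∑ i ∈ (DirectSum.decompose 𝒜 a).support,
          (DirectSum.decompose 𝒜 a i : A) * (DirectSum.decompose 𝒜 m₀ e : A) :=
        Finset.sum_congr rfl fun i _ => hhom i _ (hmem i) (DirectSum.decompose 𝒜 a i).2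
    _ = (∑ i ∈ (DirectSum.decompose 𝒜 a).support, (DirectSum.decompose 𝒜 a i : A))
          * (DirectSum.decompose 𝒜 m₀ e : A) := (Finset.sum_mul _ _ _).symm
    _ = a * (DirectSum.decompose 𝒜 m₀ e : A) := by rw [hsum]
end

section
/- In the ring C = F_2[y_0, y_1, ...]/(y_i^3 + y_i y_{i+1} : i ≥ 0), for all m ≥ 0 and k ≥ 0 one has y_m^{2^k - 1} = y_m y_{m+1} ⋯ y_{m+k-1} (the product of the k consecutive generators starting at y_m). -/
open MvPolynomial in
/-- The cube algebra C = F₂[y₀,y₁,...]/(yᵢ³ + yᵢyᵢ₊₁). -/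
noncomputable abbrev CubeAlgebra : Type :=
  MvPolynomial ℕ (ZMod 2) ⧸
    Ideal.span (Set.range fun i : ℕ =>
      (X i : MvPolynomial ℕ (ZMod 2)) ^ 3 + X i * X (i + 1))

open MvPolynomial in
noncomputable def cubeY (i : ℕ) : CubeAlgebra :=
  Ideal.Quotient.mk _ (X i)

open MvPolynomial in
lemma cube_rel (i : ℕ) : cubeY i ^ 3 = cubeY i * cubeY (i + 1) := by
  unfold cubeY
  rw [← map_pow, ← map_mul, Ideal.Quotient.eq]
  rw [CharTwo.sub_eq_add]
  exact Ideal.subset_span ⟨i, rfl⟩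

lemma cube_aux (m n : ℕ) :
    cubeY m * (cubeY m ^ 2) ^ n = cubeY m * cubeY (m + 1) ^ n := by
  induction n with
  | zero => simp
  | succ n ih =>
    have : cubeY m * (cubeY m ^ 2) ^ (n + 1) = cubeY m ^ 3 * (cubeY m ^ 2) ^ n := by ring
    rw [this, cube_rel, mul_comm (cubeY m) (cubeY (m+1)), mul_assoc, ih]
    ring

lemma cube_step (m k : ℕ) :
    cubeY m ^ (2 ^ (k + 1) - 1) = cubeY m * cubeY (m + 1) ^ (2 ^ k - 1) := by
  have h1 : (1 : ℕ) ≤ 2 ^ k := Nat.one_le_two_pow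
  have h : 2 ^ (k + 1) - 1 = 2 * (2 ^ k - 1) + 1 := by
    rw [pow_succ]; omega
  rw [h, pow_succ, pow_mul, mul_comm, cube_aux]

/-- In C, y_m^(2^k - 1) = y_m y_{m+1} ⋯ y_{m+k-1}. -/
theorem cube_y_pow (m k : ℕ) :
    cubeY m ^ (2 ^ k - 1) = ∏ i ∈ Finset.range k, cubeY (m + i) := by
  induction k generalizing m with
  | zero => simp
  | succ k ih =>
    rw [cube_step, ih (m + 1), Finset.prod_range_succ']
    simp only [add_zero, mul_comm]
    congr 1
    apply Finset.prod_congr rfl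
    intro i _
    congr 1
    omega
end

section
/- Let K be a field and let P be the set of functions a : [0,1] → K whose support supp(a) = {q : a(q) ≠ 0} is well-ordered, with pointwise addition and multiplication given by (ab)(w) = Σ_{u+v=w, u,v ∈ [0,1]} a(u)b(v). Then every nonzero a ∈ P with a(0) = 0 is nilpotent, and every a ∈ P with a(0) ≠ 0 is invertible in P. -/
section
variable {K : Type*} [Field K]

/-- An infinite root series: a function [0,1] → K (given as a function on ℝ
supported in [0,1]) with well-ordered support. -/
def IsRootSeries (a : ℝ → K) : Prop :=
  Function.support a ⊆ Set.Icc 0 1 ∧ (Function.support a).IsWF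

/-- The (truncated) convolution product on the infinite root algebra:
(ab)(w) = Σ_{u+v=w} a(u) b(v) for w ∈ [0,1], and 0 outside [0,1]. -/
noncomputable def rootMul (a b : ℝ → K) : ℝ → K := fun w =>
  if w ∈ Set.Icc (0 : ℝ) 1 then ∑ᶠ u : ℝ, a u * b (w - u) else 0

/-- The multiplicative identity: e(0) = 1, e(q) = 0 otherwise. -/
noncomputable def rootOne : ℝ → K := fun q => if q = 0 then 1 else 0

/-- Powers under the convolution product. -/
noncomputable def rootPow (a : ℝ → K) : ℕ → (ℝ → K)
  | 0 => rootOne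
  | n + 1 => rootMul a (rootPow a n)

end

section Aux

variable {K : Type*} [Field K]

/-- If a truncated convolution is nonzero at `w`, some term is nonzero. -/
lemma rootMul_ne_zero_witness {a b : ℝ → K} {w : ℝ} (h : rootMul a b w ≠ 0) :
    w ∈ Set.Icc (0 : ℝ) 1 ∧ ∃ u, a u ≠ 0 ∧ b (w - u) ≠ 0 := by
  by_cases hw : w ∈ Set.Icc (0 : ℝ) 1
  · refine ⟨hw, ?_⟩
    by_contra hc
    push_neg at hc
    apply h
    rw [rootMul, if_pos hw]
    apply finsum_eq_zero_of_forall_eq_zero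
    intro u
    by_cases hu : a u = 0
    · rw [hu, zero_mul]
    · rw [hc u hu, mul_zero]
  · exact absurd (by rw [rootMul, if_neg hw]) h

/-- The convolution coefficient as a finsum equals the Hahn series product coefficient. -/
lemma finsum_eq_hahn_mul_coeff (A B : HahnSeries ℝ K) (w : ℝ) :
    ∑ᶠ u : ℝ, A.coeff u * B.coeff (w - u) = (A * B).coeff w := by
  classical
  rw [HahnSeries.coeff_mul]
  set s := Finset.antidiagonal A.isPWO_support B.isPWO_support w with hs
  have hsub : Function.support (fun u => A.coeff u * B.coeff (w - u)) ⊆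
      ↑(s.image Prod.fst) := by
    intro u hu
    have h1 : A.coeff u ≠ 0 := fun h => hu (by simp [h])
    have h2 : B.coeff (w - u) ≠ 0 := fun h => hu (by simp [h])
    simp only [Finset.coe_image, Set.mem_image, Finset.mem_coe]
    refine ⟨(u, w - u), ?_, rfl⟩
    rw [hs, Finset.mem_addAntidiagonal]
    exact ⟨h1, h2, by ring⟩
  rw [finsum_eq_finset_sum_of_support_subset _ hsub]
  rw [Finset.sum_image (by
    intro x hx y hy hxy
    rw [hs, Finset.mem_coe, Finset.mem_addAntidiagonal] at hx hy
    have : x.2 = y.2 := by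
      have h1 := hx.2.2; have h2 := hy.2.2
      rw [hxy] at h1
      linarith
    exact Prod.ext hxy this)]
  refine Finset.sum_congr rfl ?_
  intro ij hij
  rw [hs, Finset.mem_addAntidiagonal] at hij
  have : w - ij.1 = ij.2 := by have := hij.2.2; linarith
  rw [this]

end Aux

/-- Every nonzero root series with a(0) = 0 is nilpotent, and every root series
with a(0) ≠ 0 is invertible. -/
theorem root_series_nilpotent_or_invertible (K : Type*) [Field K]
    (a : ℝ → K) (ha : IsRootSeries a) :
    (a ≠ 0 → a 0 = 0 → ∃ n : ℕ, 0 < n ∧ rootPow a n = 0) ∧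
    (a 0 ≠ 0 → ∃ b : ℝ → K, IsRootSeries b ∧ rootMul a b = rootOne) := by
  constructor
  · -- Nilpotency
    intro hne h0
    have hnonempty : (Function.support a).Nonempty := Function.support_nonempty_iff.mpr hne
    set m := ha.2.min hnonempty with hm
    have hm_mem : m ∈ Function.support a := ha.2.min_mem hnonempty
    have hm_le : ∀ u, a u ≠ 0 → m ≤ u := fun u hu => ha.2.min_le hnonempty hu
    have hm_pos : 0 < m := by
      rcases lt_or_eq_of_le (ha.1 hm_mem).1 with h | h
      · exact h
      · exact absurd h0 (by rw [← h] at hm_mem; exact hm_mem)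
    -- key induction
    have key : ∀ n : ℕ, ∀ w : ℝ, rootPow a (n + 1) w ≠ 0 → (n + 1 : ℝ) * m ≤ w ∧ w ≤ 1 := by
      intro n
      induction n with
      | zero =>
        intro w hw
        obtain ⟨hwI, u, hau, hbu⟩ := rootMul_ne_zero_witness hw
        have : w - u = 0 := by
          by_contra hne'
          exact hbu (by simp [rootPow, rootOne, hne'])
        have hwu : w = u := by linarith
        have := hm_le u hau
        refine ⟨by push_cast; linarith, hwI.2⟩
      | succ k ih =>
        intro w hw
        obtain ⟨hwI, u, hau, hbu⟩ := rootMul_ne_zero_witness hw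
        have h1 := ih (w - u) hbu
        have h2 := hm_le u hau
        constructor
        · have := h1.1
          push_cast
          push_cast at this
          linarith
        · exact hwI.2
    obtain ⟨n, hn⟩ := exists_nat_gt (1 / m)
    have hnm : 1 < ((n : ℝ) + 1) * m := by
      have : 1 / m < (n : ℝ) + 1 := lt_trans hn (by linarith)
      calc (1 : ℝ) = (1 / m) * m := by field_simp
        _ < ((n : ℝ) + 1) * m := by
          exact mul_lt_mul_of_pos_right this hm_pos
    refine ⟨n + 1, Nat.succ_pos n, ?_⟩
    funext w
    by_contra hw
    have := key n w hw
    push_cast at this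
    linarith [this.1, this.2]
  · -- Invertibility
    intro h0
    classical
    set A : HahnSeries ℝ K := ⟨a, ha.2.isPWO⟩ with hA
    have hA0 : A.coeff 0 = a 0 := rfl
    have hAne : A ≠ 0 := by
      intro h
      apply h0
      rw [← hA0, h, HahnSeries.coeff_zero]
    set B : HahnSeries ℝ K := A⁻¹ with hB
    have hAB : A * B = 1 := mul_inv_cancel₀ hAne
    have hBne : B ≠ 0 := by
      intro h
      rw [h, mul_zero] at hAB
      exact one_ne_zero hAB.symm
    -- order of A is 0
    have hordA_le : A.order ≤ 0 := HahnSeries.order_le_of_coeff_ne_zero (by rw [hA0]; exact h0)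
    have hordA_ge : 0 ≤ A.order := by
      have := HahnSeries.coeff_order_eq_zero.not.mpr hAne
      have hmem : A.order ∈ Function.support a := this
      exact (ha.1 hmem).1
    have hordA : A.order = 0 := le_antisymm hordA_le hordA_ge
    have hordB : B.order = 0 := by
      have := HahnSeries.order_mul hAne hBne
      rw [hAB, HahnSeries.order_one, hordA, zero_add] at this
      exact this.symm
    have hBneg : ∀ g : ℝ, g < 0 → B.coeff g = 0 := by
      intro g hg
      exact HahnSeries.coeff_eq_zero_of_lt_order (by rw [hordB]; exact hg)
    -- the candidate inverse
    set b : ℝ → K := fun q => if q ∈ Set.Icc (0 : ℝ) 1 then B.coeff q else 0 with hb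
    have hbsupp : Function.support b ⊆ Set.Icc 0 1 := by
      intro q hq
      by_contra hqI
      exact hq (by rw [hb]; simp [hqI])
    have hbsub : Function.support b ⊆ Function.support B.coeff := by
      intro q hq
      by_cases hqI : q ∈ Set.Icc (0 : ℝ) 1
      · intro h
        exact hq (by rw [hb]; simp only [if_pos hqI]; exact h)
      · exact absurd (by rw [hb]; simp [hqI]) hq
    refine ⟨b, ⟨hbsupp, (B.isPWO_support.isWF).mono hbsub⟩, ?_⟩
    funext w
    by_cases hw : w ∈ Set.Icc (0 : ℝ) 1
    · rw [rootMul, if_pos hw]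
      have hpt : ∀ u : ℝ, a u * b (w - u) = A.coeff u * B.coeff (w - u) := by
        intro u
        by_cases hau : a u = 0
        · have hAu : A.coeff u = 0 := hau
          rw [hau, hAu, zero_mul, zero_mul]
        · have huI : u ∈ Set.Icc (0 : ℝ) 1 := ha.1 hau
          by_cases hwu : w - u ∈ Set.Icc (0 : ℝ) 1
          · rw [hb]; simp only [if_pos hwu]; rfl
          · have hneg : w - u < 0 := by
              rcases not_and_or.mp (by rwa [Set.mem_Icc] at hwu) with h | h
              · linarith [not_le.mp h]
              · exfalso; apply h; have := hw.2; have := huI.1; linarith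
            rw [hb]
            simp only [if_neg hwu, mul_zero, hBneg _ hneg]
      calc ∑ᶠ u : ℝ, a u * b (w - u) = ∑ᶠ u : ℝ, A.coeff u * B.coeff (w - u) := by
            exact finsum_congr hpt
        _ = (A * B).coeff w := finsum_eq_hahn_mul_coeff A B w
        _ = (1 : HahnSeries ℝ K).coeff w := by rw [hAB]
        _ = rootOne w := by
            rw [HahnSeries.coeff_one]
            rfl
    · rw [rootMul, if_neg hw, rootOne]
      have : w ≠ 0 := by
        intro h
        exact hw (by rw [h]; exact ⟨le_refl 0, zero_le_one⟩)
      rw [if_neg this]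
end

section
/- In the infinite root algebra P over a field K, every ideal is of the form J_t = {a ∈ P : δ(a) > t} or J̄_t = {a ∈ P : δ(a) ≥ t} for some t ∈ [0,1], where δ(a) = min(supp(a)) for a ≠ 0 and δ(0) = ∞. Moreover ann_P(J_t) = J̄_{1−t} and ann_P(J̄_t) = J_{1−t}, and hence ann_P(ann_P(I)) = I for every ideal I of P. -/
section
variable {K : Type*} [Field K]

/-- An ideal of the infinite root algebra P, described as a subset of root
series closed under addition and under multiplication by elements of P. -/
def IsRootIdeal (I : Set (ℝ → K)) : Prop :=
  (∀ a ∈ I, IsRootSeries a) ∧ (0 : ℝ → K) ∈ I ∧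
  (∀ a ∈ I, ∀ b ∈ I, a + b ∈ I) ∧
  (∀ r : ℝ → K, IsRootSeries r → ∀ a ∈ I, rootMul r a ∈ I)

/-- J_t = {a ∈ P : δ(a) > t}, i.e. every element of the support exceeds t. -/
def rootJlt (t : ℝ) : Set (ℝ → K) :=
  {a | IsRootSeries a ∧ ∀ q ∈ Function.support a, t < q}

/-- J̄_t = {a ∈ P : δ(a) ≥ t}. -/
def rootJge (t : ℝ) : Set (ℝ → K) :=
  {a | IsRootSeries a ∧ ∀ q ∈ Function.support a, t ≤ q}

/-- The annihilator of a subset of P. -/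
def rootAnn (I : Set (ℝ → K)) : Set (ℝ → K) :=
  {x | IsRootSeries x ∧ ∀ a ∈ I, rootMul x a = 0}

end

section aux
variable {K : Type*} [Field K]

lemma isRootSeries_zero : IsRootSeries (0 : ℝ → K) := by
  constructor <;> simp [Function.support]

lemma rootMul_eq_zero_of_big (x a : ℝ → K)
    (h : ∀ u v : ℝ, x u ≠ 0 → a v ≠ 0 → 1 < u + v) : rootMul x a = 0 := by
  funext w
  rw [rootMul]
  split_ifs with hw
  · apply finsum_eq_zero_of_forall_eq_zero
    intro u
    by_contra hne
    have hx : x u ≠ 0 := fun h0 => hne (by simp [h0])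
    have ha : a (w - u) ≠ 0 := fun h0 => hne (by simp [h0])
    have := h u (w - u) hx ha
    have := hw.2
    linarith
  · rfl

/-- single point indicator -/
noncomputable def rootSingle (v : ℝ) : ℝ → K := fun w => if w = v then 1 else 0

lemma rootSingle_support (v : ℝ) : Function.support (rootSingle v : ℝ → K) = {v} := by
  ext w
  simp [rootSingle, Function.support]

lemma rootSingle_isRootSeries {v : ℝ} (hv : v ∈ Set.Icc (0:ℝ) 1) :
    IsRootSeries (rootSingle v : ℝ → K) := by
  refine ⟨?_, ?_⟩ <;> rw [rootSingle_support]
  · simpa using hv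
  · exact (Set.finite_singleton v).isWF

lemma rootMul_single (x : ℝ → K) (v : ℝ) :
    rootMul x (rootSingle v) 1 = x (1 - v) := by
  rw [rootMul, if_pos (by constructor <;> norm_num)]
  have : ∑ᶠ u : ℝ, x u * rootSingle v (1 - u) = x (1 - v) * rootSingle v (1 - (1 - v)) := by
    apply finsum_eq_single
    intro u hu
    have : (1 : ℝ) - u ≠ v := fun h => hu (by linarith)
    simp [rootSingle, this]
  rw [this]
  simp [rootSingle]

/-- ann(J_t) = J̄_{1-t} -/
lemma ann_rootJlt {t : ℝ} (ht : t ∈ Set.Icc (0:ℝ) 1) :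
    rootAnn (rootJlt t : Set (ℝ → K)) = rootJge (1 - t) := by
  ext x
  constructor
  · rintro ⟨hx, hann⟩
    refine ⟨hx, fun q hq => ?_⟩
    by_contra hlt
    push_neg at hlt
    have hq01 : q ∈ Set.Icc (0:ℝ) 1 := hx.1 hq
    set v := 1 - q with hv
    have hv01 : v ∈ Set.Icc (0:ℝ) 1 := by
      constructor <;> [linarith [hq01.2]; linarith [hq01.1]]
    have hmem : (rootSingle v : ℝ → K) ∈ rootJlt t := by
      refine ⟨rootSingle_isRootSeries hv01, fun p hp => ?_⟩
      rw [rootSingle_support] at hp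
      rw [hp]
      linarith
    have h0 := hann _ hmem
    have := rootMul_single x v
    rw [h0] at this
    simp only [Pi.zero_apply] at this
    apply hq
    rw [show (1:ℝ) - v = q by rw [hv]; ring] at this
    exact this.symm
  · rintro ⟨hx, hge⟩
    refine ⟨hx, fun a ha => ?_⟩
    apply rootMul_eq_zero_of_big
    intro u v hu hv
    have h1 := hge u hu
    have h2 := ha.2 v hv
    linarith

/-- ann(J̄_t) = J_{1-t} -/
lemma ann_rootJge {t : ℝ} (ht : t ∈ Set.Icc (0:ℝ) 1) :
    rootAnn (rootJge t : Set (ℝ → K)) = rootJlt (1 - t) := by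
  ext x
  constructor
  · rintro ⟨hx, hann⟩
    refine ⟨hx, fun q hq => ?_⟩
    by_contra hlt
    push_neg at hlt
    have hq01 : q ∈ Set.Icc (0:ℝ) 1 := hx.1 hq
    set v := 1 - q with hv
    have hv01 : v ∈ Set.Icc (0:ℝ) 1 := by
      constructor <;> [linarith [hq01.2]; linarith [hq01.1]]
    have hmem : (rootSingle v : ℝ → K) ∈ rootJge t := by
      refine ⟨rootSingle_isRootSeries hv01, fun p hp => ?_⟩
      rw [rootSingle_support] at hp
      rw [hp]
      linarith
    have h0 := hann _ hmem
    have := rootMul_single x v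
    rw [h0] at this
    simp only [Pi.zero_apply] at this
    apply hq
    rw [show (1:ℝ) - v = q by rw [hv]; ring] at this
    exact this.symm
  · rintro ⟨hx, hgt⟩
    refine ⟨hx, fun a ha => ?_⟩
    apply rootMul_eq_zero_of_big
    intro u v hu hv
    have h1 := hgt u hu
    have h2 := ha.2 v hv
    linarith

open Classical in
/-- The Hahn series attached to a root series. -/
noncomputable def hahnOf (a : ℝ → K) : HahnSeries ℝ K :=
  if h : (Function.support a).IsPWO then ⟨a, h⟩ else 0

lemma hahnOf_coeff {a : ℝ → K} (ha : IsRootSeries a) : (hahnOf a).coeff = a := by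
  rw [hahnOf, dif_pos ha.2.isPWO]

lemma hahnOf_ne_zero {a : ℝ → K} (ha : IsRootSeries a) (ha0 : a ≠ 0) : hahnOf a ≠ 0 := by
  intro h
  apply ha0
  have := hahnOf_coeff ha
  rw [h] at this
  exact this.symm

lemma hahn_mul_coeff_finsum (X Y : HahnSeries ℝ K) (w : ℝ) :
    (X * Y).coeff w = ∑ᶠ u : ℝ, X.coeff u * Y.coeff (w - u) := by
  classical
  rw [HahnSeries.coeff_mul]
  set s := Finset.antidiagonal X.isPWO_support Y.isPWO_support w with hs
  have hsupp : Function.support (fun u : ℝ => X.coeff u * Y.coeff (w - u)) ⊆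
      ↑(s.image Prod.fst) := by
    intro u hu
    have hX : X.coeff u ≠ 0 := fun h => hu (by simp [h])
    have hY : Y.coeff (w - u) ≠ 0 := fun h => hu (by simp [h])
    simp only [Finset.coe_image, Set.mem_image, Finset.mem_coe]
    refine ⟨(u, w - u), ?_, rfl⟩
    rw [hs, Finset.mem_antidiagonal]
    exact ⟨hX, hY, by ring⟩
  rw [finsum_eq_finset_sum_of_support_subset _ hsupp]
  rw [Finset.sum_image]
  · apply Finset.sum_congr rfl
    intro p hp
    rw [hs, Finset.mem_antidiagonal] at hp
    have : p.2 = w - p.1 := by linarith [hp.2.2]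
    rw [this]
  · intro p hp q hq hpq
    rw [hs, Finset.mem_coe, Finset.mem_antidiagonal] at hp hq
    have : p.2 = q.2 := by linarith [hp.2.2, hq.2.2]
    exact Prod.ext hpq this

/-- Key lemma: if a ∈ I is nonzero and every support point of b is ≥ order of a,
then b ∈ I. -/
lemma mem_ideal_of_order_le {I : Set (ℝ → K)} (hI : IsRootIdeal I)
    {a : ℝ → K} (haI : a ∈ I) (ha0 : a ≠ 0) {b : ℝ → K} (hb : IsRootSeries b)
    (hab : ∀ q ∈ Function.support b, (hahnOf a).order ≤ q) : b ∈ I := by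
  by_cases hb0 : b = 0
  · rw [hb0]; exact hI.2.1
  have ha : IsRootSeries a := hI.1 a haI
  set A := hahnOf a with hA
  set B := hahnOf b with hB
  have hA0 : A ≠ 0 := hahnOf_ne_zero ha ha0
  have hB0 : B ≠ 0 := hahnOf_ne_zero hb hb0
  set R := B * A⁻¹ with hR
  have hRA : R * A = B := by
    rw [hR, mul_assoc, inv_mul_cancel₀ hA0, mul_one]
  have hR0 : R ≠ 0 := by
    intro h
    rw [h, zero_mul] at hRA
    exact hB0 hRA.symm
  have hAB : A.order ≤ B.order := by
    apply hab
    rw [Function.mem_support]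
    have h := mt HahnSeries.coeff_order_eq_zero.mp hB0
    rwa [show B.coeff = b from hahnOf_coeff hb] at h
  have hRord : 0 ≤ R.order := by
    have h1 : (R * A).order = R.order + A.order := HahnSeries.order_mul hR0 hA0
    rw [hRA] at h1
    linarith
  set r : ℝ → K := fun w => if w ∈ Set.Icc (0:ℝ) 1 then R.coeff w else 0 with hr
  have hrval : ∀ w, r w = if w ∈ Set.Icc (0:ℝ) 1 then R.coeff w else 0 := fun _ => rfl
  have hrs : IsRootSeries r := by
    constructor
    · intro w hw
      rw [Function.mem_support, hrval w] at hw
      by_contra hcon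
      rw [if_neg hcon] at hw
      exact hw rfl
    · apply Set.IsWF.mono R.isPWO_support.isWF
      intro w hw
      rw [Function.mem_support, hrval w] at hw
      split_ifs at hw with h
      · exact hw
      · exact absurd rfl hw
  have key : rootMul r a = b := by
    funext w
    rw [rootMul]
    split_ifs with hw
    · have hterm : ∀ u : ℝ, r u * a (w - u) = R.coeff u * A.coeff (w - u) := by
        intro u
        rw [hA, hahnOf_coeff ha]
        by_cases hu : u ∈ Set.Icc (0:ℝ) 1
        · rw [hrval u, if_pos hu]
        · have hru : r u = 0 := by rw [hrval u, if_neg hu]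
          rw [hru, zero_mul]
          rcases not_and_or.mp (by rwa [Set.mem_Icc] at hu) with h | h
          · push_neg at h
            have : R.coeff u = 0 :=
              HahnSeries.coeff_eq_zero_of_lt_order (lt_of_lt_of_le h hRord)
            rw [this, zero_mul]
          · push_neg at h
            have haz : a (w - u) = 0 := by
              by_contra hcon
              have := ha.1 hcon
              rw [Set.mem_Icc] at this
              have := this.1
              have := hw.2
              linarith
            rw [haz, mul_zero]
      rw [finsum_congr hterm, ← hahn_mul_coeff_finsum, hRA, hB, hahnOf_coeff hb]
    · by_contra hcon
      have : w ∈ Function.support b := fun h => hcon h.symm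
      exact hw (hb.1 this)
  rw [← key]
  exact hI.2.2.2 r hrs a haI

lemma order_mem_Icc {a : ℝ → K} (ha : IsRootSeries a) (ha0 : a ≠ 0) :
    (hahnOf a).order ∈ Set.Icc (0:ℝ) 1 := by
  apply ha.1
  have h := mt HahnSeries.coeff_order_eq_zero.mp (hahnOf_ne_zero ha ha0)
  rw [hahnOf_coeff ha] at h
  exact h

lemma order_le_supp {a : ℝ → K} (ha : IsRootSeries a) {q : ℝ}
    (hq : q ∈ Function.support a) : (hahnOf a).order ≤ q := by
  apply HahnSeries.order_le_of_coeff_ne_zero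
  rwa [hahnOf_coeff ha]

end aux

/-- Every ideal of the infinite root algebra P is J_t or J̄_t for some t ∈ [0,1];
moreover ann(J_t) = J̄_{1-t}, ann(J̄_t) = J_{1-t}, and ann(ann(I)) = I for every
ideal I. -/
theorem root_algebra_ideals (K : Type*) [Field K] :
    (∀ I : Set (ℝ → K), IsRootIdeal I →
      (∃ t ∈ Set.Icc (0 : ℝ) 1, I = rootJlt t ∨ I = rootJge t) ∧
      rootAnn (rootAnn I) = I) ∧
    (∀ t ∈ Set.Icc (0 : ℝ) 1,
      rootAnn (rootJlt t : Set (ℝ → K)) = rootJge (1 - t) ∧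
      rootAnn (rootJge t : Set (ℝ → K)) = rootJlt (1 - t)) := by
  have hannlt : ∀ t ∈ Set.Icc (0:ℝ) 1,
      rootAnn (rootJlt t : Set (ℝ → K)) = rootJge (1 - t) := fun t ht => ann_rootJlt ht
  have hannge : ∀ t ∈ Set.Icc (0:ℝ) 1,
      rootAnn (rootJge t : Set (ℝ → K)) = rootJlt (1 - t) := fun t ht => ann_rootJge ht
  have hIcc : ∀ t ∈ Set.Icc (0:ℝ) 1, (1 - t) ∈ Set.Icc (0:ℝ) 1 := by
    intro t ht
    rw [Set.mem_Icc] at ht ⊢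
    constructor <;> linarith [ht.1, ht.2]
  have hclass : ∀ I : Set (ℝ → K), IsRootIdeal I →
      ∃ t ∈ Set.Icc (0 : ℝ) 1, I = rootJlt t ∨ I = rootJge t := by
    intro I hI
    by_cases hI0 : ∀ a ∈ I, a = 0
    · refine ⟨1, by norm_num, Or.inl ?_⟩
      ext a
      constructor
      · intro haI
        rw [hI0 a haI]
        refine ⟨isRootSeries_zero, fun q hq => ?_⟩
        simp [Function.support] at hq
      · rintro ⟨ha, hgt⟩
        have : a = 0 := by
          funext w
          by_contra hcon
          have hw : w ∈ Function.support a := hcon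
          have h1 := (ha.1 hw).2
          have h2 := hgt w hw
          linarith
        rw [this]; exact hI.2.1
    · push_neg at hI0
      obtain ⟨a₀, ha₀I, ha₀0⟩ := hI0
      set D : Set ℝ := {q | ∃ a ∈ I, a ≠ 0 ∧ (hahnOf a).order = q} with hD
      have hDne : D.Nonempty := ⟨(hahnOf a₀).order, a₀, ha₀I, ha₀0, rfl⟩
      have hDsub : ∀ q ∈ D, q ∈ Set.Icc (0:ℝ) 1 := by
        rintro q ⟨a, haI, ha0, rfl⟩
        exact order_mem_Icc (hI.1 a haI) ha0
      have hDbdd : BddBelow D := ⟨0, fun q hq => (hDsub q hq).1⟩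
      set t := sInf D with ht
      have ht0 : 0 ≤ t := le_csInf hDne fun q hq => (hDsub q hq).1
      have ht1 : t ≤ 1 := le_trans (csInf_le hDbdd hDne.choose_spec) (hDsub _ hDne.choose_spec).2
      have htIcc : t ∈ Set.Icc (0:ℝ) 1 := ⟨ht0, ht1⟩
      have hle : ∀ q ∈ D, t ≤ q := fun q hq => csInf_le hDbdd hq
      -- support points of elements of I are ≥ their order ≥ t
      have hIsupp : ∀ b ∈ I, ∀ q ∈ Function.support b, t ≤ q := by
        intro b hbI q hq
        have hb0 : b ≠ 0 := by
          intro h; rw [h] at hq; simp [Function.support] at hq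
        have hbord : (hahnOf b).order ∈ D := ⟨b, hbI, hb0, rfl⟩
        exact le_trans (hle _ hbord) (order_le_supp (hI.1 b hbI) hq)
      by_cases htD : t ∈ D
      · -- I = rootJge t
        refine ⟨t, htIcc, Or.inr ?_⟩
        obtain ⟨a, haI, ha0, haord⟩ := htD
        ext b
        constructor
        · intro hbI
          exact ⟨hI.1 b hbI, hIsupp b hbI⟩
        · rintro ⟨hb, hge⟩
          apply mem_ideal_of_order_le hI haI ha0 hb
          intro q hq
          rw [haord]
          exact hge q hq
      · -- I = rootJlt t
        refine ⟨t, htIcc, Or.inl ?_⟩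
        ext b
        constructor
        · intro hbI
          refine ⟨hI.1 b hbI, fun q hq => ?_⟩
          have hb0 : b ≠ 0 := by
            intro h; rw [h] at hq; simp [Function.support] at hq
          have hbord : (hahnOf b).order ∈ D := ⟨b, hbI, hb0, rfl⟩
          have h1 := hle _ hbord
          have h2 : t ≠ (hahnOf b).order := fun h => htD (h ▸ hbord)
          have h3 := order_le_supp (hI.1 b hbI) hq
          rcases lt_or_eq_of_le h1 with h | h
          · linarith
          · exact absurd h h2
        · rintro ⟨hb, hgt⟩
          by_cases hb0 : b = 0
          · rw [hb0]; exact hI.2.1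
          · -- δ(b) > t so some d ∈ D with d < δ(b)
            have hbord : t < (hahnOf b).order := by
              apply hgt
              have h := mt HahnSeries.coeff_order_eq_zero.mp (hahnOf_ne_zero hb hb0)
              rw [hahnOf_coeff hb] at h
              exact h
            have : ∃ d ∈ D, d < (hahnOf b).order := by
              by_contra hcon
              push_neg at hcon
              have : (hahnOf b).order ≤ t := le_csInf hDne hcon
              linarith
            obtain ⟨d, hdD, hdlt⟩ := this
            obtain ⟨a, haI, ha0, haord⟩ := hdD
            apply mem_ideal_of_order_le hI haI ha0 hb
            intro q hq
            have := order_le_supp hb hq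
            rw [haord]
            linarith
  constructor
  · intro I hIideal
    obtain ⟨t, htIcc, hcase⟩ := hclass I hIideal
    refine ⟨⟨t, htIcc, hcase⟩, ?_⟩
    rcases hcase with h | h
    · rw [h, hannlt t htIcc, hannge (1 - t) (hIcc t htIcc)]
      norm_num
    · rw [h, hannge t htIcc, hannlt (1 - t) (hIcc t htIcc)]
      norm_num
  · intro t ht
    exact ⟨hannlt t ht, hannge t ht⟩
end

section
/- Let Γ be the Rado graph: vertex set ℕ, with an edge between i ≠ j iff i ∈ B(j) or j ∈ B(i), where B(n) is the set of exponents in the binary expansion of n. Then for every finite graph G', every full subgraph G of G', and every full (induced) embedding f : G → Γ, there exists a full embedding f' : G' → Γ extending f. -/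
/-- The Rado graph on ℕ: i and j are adjacent iff i ≠ j and i occurs in the
binary expansion of j or j occurs in the binary expansion of i. -/
def RadoGraph : SimpleGraph ℕ where
  Adj i j := i ≠ j ∧ (Nat.testBit j i ∨ Nat.testBit i j)
  symm := by
    constructor
    intro i j h
    exact ⟨h.1.symm, h.2.symm⟩
  loopless := by
    constructor
    intro i h
    exact h.1 rfl

/-- The OR of powers of 2 over a finset `s` has bits exactly `s`. -/
instance : Std.Commutative (α := ℕ) (· ||| ·) := ⟨Nat.lor_comm⟩
instance : Std.Associative (α := ℕ) (· ||| ·) := ⟨Nat.lor_assoc⟩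

lemma testBit_orFold (s : Finset ℕ) (j : ℕ) :
    Nat.testBit (s.fold (· ||| ·) 0 (2 ^ ·)) j = decide (j ∈ s) := by
  classical
  induction s using Finset.induction with
  | empty => simp [Nat.zero_testBit]
  | @insert a s ha ih =>
    rw [Finset.fold_insert ha, Nat.testBit_lor, ih]
    by_cases h : j = a <;> by_cases h2 : j ∈ s <;>
      simp [h, h2, Nat.testBit_two_pow, Finset.mem_insert, eq_comm]

/-- Extension property witness for the Rado graph: given disjoint finsets `A`, `B`,
there is `z` larger than everything in `A ∪ B`, adjacent to all of `A` and none of `B`. -/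
lemma rado_ext_one (A B : Finset ℕ) (hAB : Disjoint A B) :
    ∃ z : ℕ, (∀ a ∈ A, RadoGraph.Adj z a) ∧ (∀ b ∈ B, ¬ RadoGraph.Adj z b) ∧
      (∀ n ∈ A ∪ B, n < z) := by
  classical
  set m := (A ∪ B).sup id + 1 with hm
  set z := (insert m ((A ∪ B).filter (· ∈ A))).fold (fun x y : ℕ => x ||| y) 0 (2 ^ ·) with hz
  have hbits : ∀ j, Nat.testBit z j = decide (j ∈ insert m ((A ∪ B).filter (· ∈ A))) :=
    fun j => testBit_orFold _ j
  have hmem : ∀ n ∈ A ∪ B, n < m := by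
    intro n hn
    exact Nat.lt_succ_of_le (Finset.le_sup (f := id) hn)
  have hzm : Nat.testBit z m = true := by simp [hbits]
  have hzge : 2 ^ m ≤ z := by
    by_contra h
    rw [Nat.testBit_eq_false_of_lt (Nat.lt_of_not_le h)] at hzm
    exact Bool.false_ne_true hzm
  have hbig : ∀ n ∈ A ∪ B, n < z := by
    intro n hn
    calc n < m := hmem n hn
    _ < 2 ^ m := Nat.lt_two_pow_self
    _ ≤ z := hzge
  refine ⟨z, ?_, ?_, hbig⟩
  · intro a ha
    refine ⟨(hbig a (Finset.mem_union_left _ ha)).ne', Or.inr ?_⟩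
    rw [hbits]
    simp [Finset.mem_insert, Finset.mem_filter, Finset.mem_union, ha]
  · intro b hb hadj
    rcases hadj.2 with h | h
    · -- testBit b z : impossible since z > b
      have : 2 ^ z ≤ b := by
        by_contra hc
        rw [Nat.testBit_eq_false_of_lt (Nat.lt_of_not_le hc)] at h
        exact Bool.false_ne_true h
      have hbz := hbig b (Finset.mem_union_right _ hb)
      have : b < b := lt_of_lt_of_le (lt_of_lt_of_le hbz (Nat.le_of_lt (Nat.lt_two_pow_self (n := z)))) this
      exact absurd this (lt_irrefl b)
    · -- testBit z b : b would be in the bit set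
      rw [hbits] at h
      simp only [decide_eq_true_eq, Finset.mem_insert, Finset.mem_filter] at h
      rcases h with heq | ⟨_, hbA⟩
      · have := hmem b (Finset.mem_union_right _ hb)
        omega
      · exact (Finset.disjoint_left.mp hAB hbA) hb

/-- Inductive extension lemma: bounded induction on the size of the complement. -/
lemma rado_extension_aux (V : Type*) [Fintype V] (G' : SimpleGraph V) :
    ∀ k : ℕ, ∀ (S : Set V) (f : S → ℕ), Function.Injective f →
    (∀ u v : S, G'.Adj u v ↔ RadoGraph.Adj (f u) (f v)) →
    (Sᶜ).ncard ≤ k →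
    ∃ f' : V → ℕ, Function.Injective f' ∧
      (∀ u v : V, G'.Adj u v ↔ RadoGraph.Adj (f' u) (f' v)) ∧
      ∀ s : S, f' s = f s := by
  classical
  intro k
  induction k with
  | zero =>
    intro S f hinj hfull hcard
    have hS : S = Set.univ := by
      have : (Sᶜ) = ∅ := by
        rw [← Set.ncard_eq_zero (Sᶜ.toFinite)]
        omega
      rw [← Set.compl_empty_iff, this]
    subst hS
    refine ⟨fun v => f ⟨v, Set.mem_univ v⟩, ?_, ?_, ?_⟩
    · intro a b h
      have := hinj h
      exact congrArg Subtype.val this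
    · intro u v
      exact hfull ⟨u, Set.mem_univ u⟩ ⟨v, Set.mem_univ v⟩
    · intro s
      rfl
  | succ k ih =>
    intro S f hinj hfull hcard
    by_cases hSu : Sᶜ = ∅
    · exact ih S f hinj hfull (by rw [hSu]; simp)
    · obtain ⟨v, hv⟩ := Set.nonempty_iff_ne_empty.mpr hSu
      have hvS : v ∉ S := hv
      -- images of neighbors and non-neighbors of v in S
      set A : Finset ℕ := ((fun s : S => f s) '' {s : S | G'.Adj v s}).toFinite.toFinset with hA
      set B : Finset ℕ := ((fun s : S => f s) '' {s : S | ¬ G'.Adj v s}).toFinite.toFinset with hB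
      have hAmem : ∀ s : S, G'.Adj v s → f s ∈ A := by
        intro s hs
        rw [hA, Set.Finite.mem_toFinset]
        exact ⟨s, hs, rfl⟩
      have hBmem : ∀ s : S, ¬ G'.Adj v s → f s ∈ B := by
        intro s hs
        rw [hB, Set.Finite.mem_toFinset]
        exact ⟨s, hs, rfl⟩
      have hAB : Disjoint A B := by
        rw [Finset.disjoint_left]
        intro n hnA hnB
        rw [hA, Set.Finite.mem_toFinset] at hnA
        rw [hB, Set.Finite.mem_toFinset] at hnB
        obtain ⟨s₁, hs₁, rfl⟩ := hnA
        obtain ⟨s₂, hs₂, he⟩ := hnB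
        exact hs₂ ((hinj he.symm ▸ hs₁ : G'.Adj v s₂))
      obtain ⟨z, hzA, hzB, hzbig⟩ := rado_ext_one A B hAB
      have hzne : ∀ s : S, f s ≠ z := by
        intro s
        by_cases hs : G'.Adj v s
        · exact (hzbig _ (Finset.mem_union_left _ (hAmem s hs))).ne
        · exact (hzbig _ (Finset.mem_union_right _ (hBmem s hs))).ne
      -- extend f
      set S' : Set V := insert v S with hS'
      have hvmem : ∀ x : S', x.val ∉ S → x.val = v := by
        intro x hx
        rcases x.property with h | h
        · exact h
        · exact absurd h hx
      set g : S' → ℕ := fun x => if h : x.val ∈ S then f ⟨x.val, h⟩ else z with hg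
      have hgS : ∀ (x : S') (h : x.val ∈ S), g x = f ⟨x.val, h⟩ := by
        intro x h; simp [hg, h]
      have hgv : ∀ (x : S'), x.val ∉ S → g x = z := by
        intro x h; simp [hg, h]
      have hginj : Function.Injective g := by
        intro x y hxy
        by_cases hx : x.val ∈ S <;> by_cases hy : y.val ∈ S
        · rw [hgS x hx, hgS y hy] at hxy
          have h2 : (⟨x.val, hx⟩ : S).val = (⟨y.val, hy⟩ : S).val :=
            congrArg Subtype.val (hinj hxy)
          exact Subtype.ext h2
        · rw [hgS x hx, hgv y hy] at hxy
          exact absurd hxy (hzne _)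
        · rw [hgv x hx, hgS y hy] at hxy
          exact absurd hxy.symm (hzne _)
        · exact Subtype.ext ((hvmem x hx).trans (hvmem y hy).symm)
      have hgadj : ∀ (x : S') (h : x.val ∉ S) (y : S') (hy : y.val ∈ S),
          (G'.Adj x.val y.val ↔ RadoGraph.Adj (g x) (g y)) := by
        intro x hx y hy
        rw [hgv x hx, hgS y hy, hvmem x hx]
        constructor
        · intro hadj
          exact hzA _ (hAmem ⟨y.val, hy⟩ hadj)
        · intro hadj
          by_contra hne
          exact hzB _ (hBmem ⟨y.val, hy⟩ hne) hadj
      have hgfull : ∀ x y : S', G'.Adj x y ↔ RadoGraph.Adj (g x) (g y) := by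
        intro x y
        by_cases hx : x.val ∈ S <;> by_cases hy : y.val ∈ S
        · rw [hgS x hx, hgS y hy]
          exact hfull ⟨x.val, hx⟩ ⟨y.val, hy⟩
        · rw [G'.adj_comm, RadoGraph.adj_comm]
          exact hgadj y hy x hx
        · exact hgadj x hx y hy
        · have hxy : (x : V) = y := (hvmem x hx).trans (hvmem y hy).symm
          rw [hgv x hx, hgv y hy]
          simp [hxy, SimpleGraph.irrefl]
      have hcard' : (S'ᶜ).ncard ≤ k := by
        have h1 : S'ᶜ = Sᶜ \ {v} := by
          rw [hS']
          ext x
          simp only [Set.mem_compl_iff, Set.mem_insert_iff, Set.mem_diff,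
            Set.mem_singleton_iff]
          tauto
        have h2 : (Sᶜ \ {v}).ncard < (Sᶜ).ncard :=
          Set.ncard_diff_singleton_lt_of_mem hv (Sᶜ.toFinite)
        rw [h1]
        omega
      obtain ⟨f', hf'inj, hf'full, hf'ext⟩ := ih S' g hginj hgfull hcard'
      refine ⟨f', hf'inj, hf'full, ?_⟩
      intro s
      have hsS' : (s : V) ∈ S' := Set.mem_insert_of_mem v s.property
      exact (hf'ext ⟨s, hsS'⟩).trans (hgS ⟨s, hsS'⟩ s.property)

/-- Any full embedding of a full subgraph of a finite graph into the Rado graph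
extends to a full embedding of the whole graph. -/
theorem rado_extension (V : Type*) [Fintype V] (G' : SimpleGraph V)
    (S : Set V) (f : S → ℕ) (hinj : Function.Injective f)
    (hfull : ∀ u v : S, G'.Adj u v ↔ RadoGraph.Adj (f u) (f v)) :
    ∃ f' : V → ℕ, Function.Injective f' ∧
      (∀ u v : V, G'.Adj u v ↔ RadoGraph.Adj (f' u) (f' v)) ∧
      ∀ s : S, f' s = f s := by
  exact rado_extension_aux V G' ((Sᶜ).ncard) S f hinj hfull le_rfl
end

section
/- For every ordinal α < ε₀, every finite set J of ordinals below ε₀, and every function ν : J → ℕ, there exists an ordinal γ < ε₀ with γ ∉ J such that for all β ∈ J: the coefficient of ω^β in the Cantor normal form of γ equals ν(β), and the coefficient of ω^γ in the Cantor normal form of β is 0. -/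
open Ordinal

/-- ε₀ is the least ordinal satisfying ω^ε₀ = ε₀. -/
noncomputable def epsilon0 : Ordinal := sInf {o : Ordinal | Ordinal.omega0 ^ o = o}

/-- The coefficient of ω^β in the Cantor normal form of o. -/
noncomputable def cnfCoeff (o β : Ordinal) : Ordinal :=
  o / Ordinal.omega0 ^ β % Ordinal.omega0

lemma omega0_opow_epsilon0 : Ordinal.omega0 ^ epsilon0 = epsilon0 := by
  have h : epsilon0 ∈ {o : Ordinal | Ordinal.omega0 ^ o = o} :=
    csInf_mem ⟨nfp (Ordinal.omega0 ^ ·) 0, nfp_fp (isNormal_opow one_lt_omega0) 0⟩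
  exact h

lemma epsilon0_pos : (0 : Ordinal) < epsilon0 := by
  rw [← omega0_opow_epsilon0]; exact opow_pos _ omega0_pos

lemma one_lt_epsilon0 : (1 : Ordinal) < epsilon0 := by
  have : Ordinal.omega0 ^ (1 : Ordinal) ≤ Ordinal.omega0 ^ epsilon0 :=
    opow_le_opow_right omega0_pos (Order.one_le_iff_pos.2 epsilon0_pos)
  rw [opow_one, omega0_opow_epsilon0] at this
  exact lt_of_lt_of_le one_lt_omega0 this

lemma cnfCoeff_high_add {b β x : Ordinal} (q : Ordinal) (hx : x < Ordinal.omega0 ^ b)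
    (hβ : β < b) : cnfCoeff (Ordinal.omega0 ^ b * q + x) β = cnfCoeff x β := by
  obtain ⟨c, rfl⟩ : ∃ c, b = β + c := ⟨b - β, (Ordinal.add_sub_cancel_of_le hβ.le).symm⟩
  have hc0 : c ≠ 0 := by rintro rfl; simp at hβ
  obtain ⟨d, rfl⟩ : ∃ d, c = 1 + d :=
    ⟨c - 1, (Ordinal.add_sub_cancel_of_le (Ordinal.one_le_iff_ne_zero.2 hc0)).symm⟩
  unfold cnfCoeff
  rw [opow_add, mul_assoc, Ordinal.mul_add_div _ (opow_ne_zero β omega0_ne_zero),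
    opow_add, opow_one, mul_assoc, Ordinal.mul_add_mod_self]

lemma key (ν : Ordinal → ℕ) (J : Finset Ordinal) : ∀ b : Ordinal, (∀ β ∈ J, β < b) →
    ∃ x, x < Ordinal.omega0 ^ b ∧ ∀ β ∈ J, cnfCoeff x β = (ν β : Ordinal) := by
  induction J using Finset.strongInduction with
  | _ J IH =>
    intro b hb
    rcases J.eq_empty_or_nonempty with rfl | hne
    · exact ⟨0, opow_pos b omega0_pos, by simp⟩
    · set m := J.max' hne with hm
      have hmJ : m ∈ J := J.max'_mem hne
      have hmb : m < b := hb m hmJ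
      obtain ⟨x', hx', hc'⟩ := IH (J.erase m) (J.erase_ssubset hmJ) m
        (fun β hβ => lt_of_le_of_ne (J.le_max' β (Finset.mem_of_mem_erase hβ))
          (Finset.ne_of_mem_erase hβ))
      refine ⟨Ordinal.omega0 ^ m * (ν m : Ordinal) + x', ?_, ?_⟩
      · have h1 : Ordinal.omega0 ^ m * (ν m : Ordinal) + x' <
            Ordinal.omega0 ^ m * ((ν m : Ordinal) + 1) := by
          rw [mul_add_one]; exact (add_lt_add_iff_left _).2 hx'
        have h2 : Ordinal.omega0 ^ m * ((ν m : Ordinal) + 1) ≤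
            Ordinal.omega0 ^ m * Ordinal.omega0 := by
          apply mul_le_mul_right
          have h : ((ν m : Ordinal) + 1) = ((ν m + 1 : ℕ) : Ordinal) := by push_cast; ring
          rw [h]; exact (nat_lt_omega0 _).le
        have h3 : Ordinal.omega0 ^ m * Ordinal.omega0 ≤ Ordinal.omega0 ^ b := by
          rw [← opow_succ]
          exact opow_le_opow_right omega0_pos (Order.succ_le_of_lt hmb)
        exact h1.trans_le (h2.trans h3)
      · intro β hβ
        by_cases hβm : β = m
        · subst hβm
          unfold cnfCoeff
          rw [Ordinal.mul_add_div _ (opow_ne_zero _ omega0_ne_zero),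
            Ordinal.div_eq_zero_of_lt hx', add_zero, Ordinal.mod_eq_of_lt (nat_lt_omega0 _)]
        · have hβm' : β ∈ J.erase m := Finset.mem_erase.2 ⟨hβm, hβ⟩
          have hβlt : β < m := lt_of_le_of_ne (J.le_max' β hβ) hβm
          rw [cnfCoeff_high_add _ hx' hβlt]
          exact hc' β hβm'

/-- The extension property for the ε₀-algebra: given a finite set J of ordinals
below ε₀ and ν : J → ℕ, there is γ < ε₀, γ ∉ J, whose CNF coefficient at each
β ∈ J is ν(β), while γ does not occur as an exponent-coefficient in any β ∈ J. -/
theorem epsilon0_extension_property (α : Ordinal) (hα : α < epsilon0)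
    (J : Finset Ordinal) (hJ : ∀ β ∈ J, β < epsilon0) (ν : Ordinal → ℕ) :
    ∃ γ : Ordinal, γ < epsilon0 ∧ γ ∉ J ∧
      ∀ β ∈ J, cnfCoeff γ β = (ν β : Ordinal) ∧ cnfCoeff β γ = 0 := by
  set b₀ : Ordinal := J.sup id + 1 with hb₀def
  have hsup_lt : J.sup id < epsilon0 := by
    rcases J.eq_empty_or_nonempty with rfl | hne
    · simpa using epsilon0_pos
    · exact (Finset.sup_lt_iff epsilon0_pos).2 (fun β hβ => hJ β hβ)
  have hb₀ : b₀ < epsilon0 := by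
    have h1 : J.sup id < Ordinal.omega0 ^ epsilon0 := omega0_opow_epsilon0.symm ▸ hsup_lt
    have h2 : (1 : Ordinal) < Ordinal.omega0 ^ epsilon0 :=
      omega0_opow_epsilon0.symm ▸ one_lt_epsilon0
    have := principal_add_omega0_opow epsilon0 h1 h2
    rwa [omega0_opow_epsilon0] at this
  have hJb₀ : ∀ β ∈ J, β < b₀ := fun β hβ =>
    lt_of_le_of_lt (by simpa using Finset.le_sup (f := id) hβ) (lt_add_one _)
  obtain ⟨x, hx, hc⟩ := key ν J b₀ hJb₀
  have hωb₀ : Ordinal.omega0 ^ b₀ < epsilon0 := by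
    rw [← omega0_opow_epsilon0]
    exact (opow_lt_opow_iff_right one_lt_omega0).2 hb₀
  have hγlt : Ordinal.omega0 ^ b₀ + x < epsilon0 := by
    have h1 : Ordinal.omega0 ^ b₀ < Ordinal.omega0 ^ epsilon0 :=
      omega0_opow_epsilon0.symm ▸ hωb₀
    have h2 : x < Ordinal.omega0 ^ epsilon0 :=
      omega0_opow_epsilon0.symm ▸ (hx.trans hωb₀)
    have := principal_add_omega0_opow epsilon0 h1 h2
    rwa [omega0_opow_epsilon0] at this
  have hbig : ∀ β ∈ J, β < Ordinal.omega0 ^ b₀ + x := fun β hβ =>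
    lt_of_lt_of_le ((hJb₀ β hβ).trans_le (right_le_opow b₀ one_lt_omega0)) le_self_add
  refine ⟨Ordinal.omega0 ^ b₀ + x, hγlt, fun h => absurd (hbig _ h) (lt_irrefl _), fun β hβ => ⟨?_, ?_⟩⟩
  · have := cnfCoeff_high_add (b := b₀) (β := β) (x := x) 1 hx (hJb₀ β hβ)
    rw [mul_one] at this
    rw [this]; exact hc β hβ
  · unfold cnfCoeff
    rw [Ordinal.div_eq_zero_of_lt, Ordinal.zero_mod]
    exact (hbig β hβ).trans_le (right_le_opow _ one_lt_omega0)
end
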